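/- Let Λ ⊆ ℝ^n be a lattice, Φ an expanding injective endomorphism of ℝ^n with Φ(Λ) ⊆ Λ, V a subset of ℝ^n tiling ℝ^n by Λ, and let ‖·‖ be a vector norm on ℝ^n whose induced operator norm satisfies ‖Φ^{−1}‖ < 1. Let r, R > 0 be such that {x : ‖x‖ ≤ r} ⊆ V ⊆ {x : ‖x‖ ≤ R}. Let D = D• ∪ {0}, where D• ⊆ {α ∈ Λ : Φ^{−w}(α) ∈ V} contains exactly one representative of every residue class of Λ modulo Φ^w(Λ) not contained in Φ(Λ). If w is a positive integer with ‖Φ^{−1}‖^w < 1/(1 + R/r), then D is a w-NADS: every element of Λ admits a D-w-NAF expansion. -/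

import Mathlib

theorem naf_prepend
    {E : Type*} [NormedAddCommGroup E] [NormedSpace ℝ E]
    (Φ : E ≃ₗ[ℝ] E) (w : ℕ) (D : Set E)
    (k : ℕ) (hk1 : 1 ≤ k) (δ β α : E)
    (hδα : α = δ + ((Φ : E →ₗ[ℝ] E) ^ k) β)
    (hkw : δ ≠ 0 → w ≤ k) (hδD : δ ∈ insert (0 : E) D)
    (ℓ : ℕ) (η : Fin ℓ → E)
    (h1 : ∀ j, η j ∈ insert (0 : E) D)
    (h2 : ∀ i j : Fin ℓ, (i : ℕ) < (j : ℕ) → (j : ℕ) < (i : ℕ) + w → η i ≠ 0 → η j = 0)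
    (h3 : (∑ j : Fin ℓ, ((Φ : E →ₗ[ℝ] E) ^ (j : ℕ)) (η j)) = β) :
    ∃ η' : Fin (k + ℓ) → E,
      (∀ j, η' j ∈ insert (0 : E) D) ∧
      (∀ i j : Fin (k + ℓ), (i : ℕ) < (j : ℕ) → (j : ℕ) < (i : ℕ) + w → η' i ≠ 0 → η' j = 0) ∧
      (∑ j : Fin (k + ℓ), ((Φ : E →ₗ[ℝ] E) ^ (j : ℕ)) (η' j)) = α := by
  refine ⟨fun j => if h : (j : ℕ) < k then (if (j : ℕ) = 0 then δ else 0) else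
      η ⟨(j : ℕ) - k, by omega⟩, ?_, ?_, ?_⟩
  · intro j
    by_cases h : (j : ℕ) < k
    · have h0k : (0:ℕ) < k := hk1
      by_cases h0 : (j : ℕ) = 0 <;> simp [h, h0, h0k, hδD]
    · simpa [h] using h1 _
  · intro i j hij hjw hi
    by_cases h : (i : ℕ) < k
    · simp only [dif_pos h] at hi
      by_cases h0 : (i : ℕ) = 0
      · have hwk : w ≤ k := hkw (by simpa [h0] using hi)
        have hjk : (j : ℕ) < k := by omega
        have hj0 : (j : ℕ) ≠ 0 := by omega
        simp [hjk, hj0]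
      · simp [h0] at hi
    · simp only [dif_neg h] at hi
      have hjk : ¬ (j : ℕ) < k := by omega
      simp only [dif_neg hjk]
      exact h2 ⟨(i : ℕ) - k, by omega⟩ ⟨(j : ℕ) - k, by omega⟩ (by simp; omega)
        (by simp; omega) hi
  · rw [Fin.sum_univ_add]
    have e1 : ∀ i : Fin k, (((Fin.castAdd ℓ i) : Fin (k + ℓ)) : ℕ) = (i : ℕ) := fun i => rfl
    haveI : NeZero k := ⟨by omega⟩
    have hs1 : (∑ i : Fin k, ((Φ : E →ₗ[ℝ] E) ^ ((Fin.castAdd ℓ i : Fin (k + ℓ)) : ℕ))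
        ((fun j : Fin (k+ℓ) => if h : (j : ℕ) < k then (if (j : ℕ) = 0 then δ else 0) else
          η ⟨(j : ℕ) - k, by omega⟩) (Fin.castAdd ℓ i))) = δ := by
      have h0k : (0:ℕ) < k := hk1
      rw [Fintype.sum_eq_single (0 : Fin k)]
      · simp [h0k]
      · intro i hi0
        have : (i : ℕ) ≠ 0 := fun h => hi0 (Fin.ext h)
        simp [e1, this, Fin.is_lt i]
    rw [hs1]
    have hs2 : (∑ i : Fin ℓ, ((Φ : E →ₗ[ℝ] E) ^ ((Fin.natAdd k i : Fin (k + ℓ)) : ℕ))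
        ((fun j : Fin (k+ℓ) => if h : (j : ℕ) < k then (if (j : ℕ) = 0 then δ else 0) else
          η ⟨(j : ℕ) - k, by omega⟩) (Fin.natAdd k i))) = ((Φ : E →ₗ[ℝ] E) ^ k) β := by
      rw [← h3, map_sum]
      refine Finset.sum_congr rfl fun i _ => ?_
      have hv : ((Fin.natAdd k i : Fin (k + ℓ)) : ℕ) = k + (i : ℕ) := rfl
      have hnk : ¬ ((Fin.natAdd k i : Fin (k + ℓ)) : ℕ) < k := by omega
      simp only [dif_neg hnk]
      have hidx : (⟨((Fin.natAdd k i : Fin (k + ℓ)) : ℕ) - k, by omega⟩ : Fin ℓ) = i := by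
        apply Fin.ext; simp
      rw [hidx, hv, pow_add, Module.End.mul_apply]

    rw [hs2, hδα]

/-- Theorem 4.3: a tiling-based digit set is a `w`-NADS provided
`‖Φ⁻¹‖^w < 1/(1 + R/r)`. -/
theorem tiling_wNADS
    {E : Type*} [NormedAddCommGroup E] [NormedSpace ℝ E] [FiniteDimensional ℝ E]
    {n : ℕ} (b : Module.Basis (Fin n) ℝ E)
    (Λ : Set E) (hΛ : Λ = ↑(Submodule.span ℤ (Set.range ⇑b)))
    (Φ : E ≃ₗ[ℝ] E) (hΦΛ : ∀ x ∈ Λ, Φ x ∈ Λ)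
    (hexp : ∀ lam : ℂ,
      (Polynomial.map (algebraMap ℝ ℂ) (LinearMap.charpoly (Φ : E →ₗ[ℝ] E))).IsRoot lam →
      1 < ‖lam‖)
    (V : Set E)
    (hVcover : ∀ x : E, ∃ z ∈ Λ, x - z ∈ V)
    (hVdisj : ∀ z ∈ Λ, z ≠ 0 → ∀ x ∈ V, x - z ∈ V → x ∈ frontier V)
    (q : ℝ) (hq : q = ‖LinearMap.toContinuousLinearMap (Φ.symm : E →ₗ[ℝ] E)‖)
    (hq1 : q < 1)
    (r R : ℝ) (hr : 0 < r) (hR : 0 < R)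
    (hrV : {x : E | ‖x‖ ≤ r} ⊆ V) (hVR : V ⊆ {x : E | ‖x‖ ≤ R})
    (w : ℕ) (hw : 1 ≤ w)
    (Dbul : Set E)
    (hDV : Dbul ⊆ {α ∈ Λ | (Φ ^ w).symm α ∈ V})
    (hDnot : ∀ δ ∈ Dbul, δ ∉ ⇑Φ '' Λ)
    (hDrep : ∀ α ∈ Λ, α ∉ ⇑Φ '' Λ →
      ∃! δ, δ ∈ Dbul ∧ α - δ ∈ ⇑(Φ ^ w) '' Λ)
    (hbound : q ^ w < 1 / (1 + R / r)) :
    ∀ α ∈ Λ, ∃ (ℓ : ℕ) (η : Fin ℓ → E),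
      (∀ j, η j ∈ insert (0 : E) Dbul) ∧
      (∀ i j : Fin ℓ, (i : ℕ) < (j : ℕ) → (j : ℕ) < (i : ℕ) + w → η i ≠ 0 → η j = 0) ∧
      (∑ j : Fin ℓ, ((Φ : E →ₗ[ℝ] E) ^ (j : ℕ)) (η j)) = α := by
  -- basic norm bounds
  have hq0 : 0 ≤ q := hq ▸ norm_nonneg _
  have hqb : ∀ x : E, ‖Φ.symm x‖ ≤ q * ‖x‖ := by
    intro x
    rw [hq]
    simpa using (LinearMap.toContinuousLinearMap (Φ.symm : E →ₗ[ℝ] E)).le_opNorm x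
  have hqiter : ∀ m : ℕ, ∀ x : E, ‖(⇑Φ.symm)^[m] x‖ ≤ q ^ m * ‖x‖ := by
    intro m
    induction m with
    | zero => simp
    | succ m ih =>
      intro x
      rw [Function.iterate_succ_apply']
      calc ‖Φ.symm ((⇑Φ.symm)^[m] x)‖ ≤ q * ‖(⇑Φ.symm)^[m] x‖ := hqb _
      _ ≤ q * (q ^ m * ‖x‖) := mul_le_mul_of_nonneg_left (ih x) hq0
      _ = q ^ (m + 1) * ‖x‖ := by ring
  set c : ℝ := max ‖LinearMap.toContinuousLinearMap (Φ : E →ₗ[ℝ] E)‖ 1 with hc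
  have hc1 : 1 ≤ c := le_max_right _ _
  have hcb : ∀ x : E, ‖Φ x‖ ≤ c * ‖x‖ := by
    intro x
    calc ‖Φ x‖ ≤ ‖LinearMap.toContinuousLinearMap (Φ : E →ₗ[ℝ] E)‖ * ‖x‖ := by
          simpa using (LinearMap.toContinuousLinearMap (Φ : E →ₗ[ℝ] E)).le_opNorm x
    _ ≤ c * ‖x‖ := mul_le_mul_of_nonneg_right (le_max_left _ _) (norm_nonneg x)
  have hciter : ∀ m : ℕ, ∀ x : E, ‖(⇑Φ)^[m] x‖ ≤ c ^ m * ‖x‖ := by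
    intro m
    induction m with
    | zero => simp
    | succ m ih =>
      intro x
      rw [Function.iterate_succ_apply']
      calc ‖Φ ((⇑Φ)^[m] x)‖ ≤ c * ‖(⇑Φ)^[m] x‖ := hcb _
      _ ≤ c * (c ^ m * ‖x‖) := mul_le_mul_of_nonneg_left (ih x) (by linarith)
      _ = c ^ (m + 1) * ‖x‖ := by ring
  set C : ℝ := c ^ w with hC
  have hC1 : (1 : ℝ) ≤ C := by
    calc (1:ℝ) = 1 ^ w := (one_pow w).symm
    _ ≤ c ^ w := pow_le_pow_left₀ zero_le_one hc1 w
  have hC0 : (0 : ℝ) < C := lt_of_lt_of_le zero_lt_one hC1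
  -- the contraction Ψ = Φ.symm ^ w
  set Ψ : E ≃ₗ[ℝ] E := Φ.symm ^ w with hΨdef
  have hΨit : ∀ x : E, Ψ x = (⇑Φ.symm)^[w] x := fun x => by rw [LinearEquiv.pow_apply]
  have hLI : Function.LeftInverse (⇑Φ.symm) ⇑Φ := Φ.symm_apply_apply
  have hRI : Function.LeftInverse ⇑Φ ⇑Φ.symm := Φ.apply_symm_apply
  have hLIw : Function.LeftInverse ((⇑Φ.symm)^[w]) ((⇑Φ)^[w]) := hLI.iterate w
  have hRIw : Function.LeftInverse ((⇑Φ)^[w]) ((⇑Φ.symm)^[w]) := hRI.iterate w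
  have hsymmpow : ∀ x : E, (Φ ^ w).symm x = Ψ x := by
    intro x
    rw [LinearEquiv.symm_apply_eq, LinearEquiv.pow_apply, hΨit]
    exact (hRIw x).symm
  have hΨb : ∀ y : E, ‖Ψ y‖ ≤ q ^ w * ‖y‖ := fun y => by
    rw [hΨit]; exact hqiter w y
  have hLM : ∀ (m : ℕ) (x : E), ((Φ : E →ₗ[ℝ] E) ^ m) x = (Φ ^ m : E ≃ₗ[ℝ] E) x := by
    intro m x
    rw [Module.End.pow_apply, LinearEquiv.pow_apply]
    simp only [LinearEquiv.coe_coe]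
  -- discreteness of Λ from the tiling
  have hdisc : ∀ γ ∈ Λ, γ ≠ 0 → r < ‖γ‖ := by
    intro γ hγ hγ0
    by_contra hle
    push_neg at hle
    have h0V : (0 : E) ∈ V := hrV (by simp [hr.le])
    have hmγ : (0 : E) - γ ∈ V := hrV (by simpa using hle)
    have hfr := hVdisj γ hγ hγ0 0 h0V hmγ
    have hint : (0 : E) ∈ interior V :=
      interior_maximal (fun x hx => hrV (le_of_lt (mem_ball_zero_iff.mp hx)))
        Metric.isOpen_ball (Metric.mem_ball_self hr)
    exact hfr.2 hint
  set ρ : ℝ := r / C with hρdef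
  have hρ0 : 0 < ρ := div_pos hr hC0
  have hflow : ∀ γ ∈ Λ, γ ≠ 0 → ρ < ‖Ψ γ‖ := by
    intro γ hγ hγ0
    have h1 : ‖γ‖ ≤ C * ‖Ψ γ‖ := by
      have h2 := hciter w ((⇑Φ.symm)^[w] γ)
      rw [hRIw γ] at h2
      rw [hΨit]
      exact h2
    have h3 := hdisc γ hγ hγ0
    rw [hρdef, div_lt_iff₀ hC0]
    nlinarith
  set s : ℝ := q ^ w with hs
  have hs0 : 0 ≤ s := pow_nonneg hq0 w
  have hs1 : s < 1 := pow_lt_one₀ hq0 hq1 (by omega)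
  have hkey : s * (r + R) < r := by
    have e : 1 / (1 + R / r) = r / (r + R) := by
      rw [div_eq_div_iff (by positivity) (by positivity)]
      field_simp
    rw [e] at hbound
    exact (lt_div_iff₀ (by positivity)).mp hbound
  set ε : ℝ := min ((1 - q) * ρ) (min ((1 - s) * r - s * R) ρ) with hε
  have hε0 : 0 < ε := lt_min (by nlinarith) (lt_min (by nlinarith) hρ0)
  -- main induction
  have main : ∀ k : ℕ, ∀ α, α ∈ Λ → ‖Ψ α‖ ≤ ε * k →
      ∃ (ℓ : ℕ) (η : Fin ℓ → E),
        (∀ j, η j ∈ insert (0 : E) Dbul) ∧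
        (∀ i j : Fin ℓ, (i : ℕ) < (j : ℕ) → (j : ℕ) < (i : ℕ) + w → η i ≠ 0 → η j = 0) ∧
        (∑ j : Fin ℓ, ((Φ : E →ₗ[ℝ] E) ^ (j : ℕ)) (η j)) = α := by
    intro k
    induction k with
    | zero =>
      intro α hα hfα
      have hΨ0 : Ψ α = 0 :=
        norm_eq_zero.mp (le_antisymm (by simpa using hfα) (norm_nonneg _))
      have hα0 : α = 0 := by
        have h2 : (⇑Φ.symm)^[w] α = 0 := by rw [← hΨit]; exact hΨ0
        have h3 := congrArg ((⇑Φ)^[w]) h2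
        rw [hRIw α, Function.iterate_fixed (map_zero Φ) w] at h3
        exact h3
      exact ⟨0, Fin.elim0, fun j => j.elim0, fun i => i.elim0, by simp [hα0]⟩
    | succ k ih =>
      intro α hα hfα
      by_cases hα0 : α = 0
      · exact ⟨0, Fin.elim0, fun j => j.elim0, fun i => i.elim0, by simp [hα0]⟩
      have hρα : ρ < ‖Ψ α‖ := hflow α hα hα0
      push_cast at hfα
      by_cases hsurj : α ∈ ⇑Φ '' Λ
      · obtain ⟨β, hβΛ, hβ⟩ := hsurj
        have hβα : β = Φ.symm α := by rw [← hβ, Φ.symm_apply_apply]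
        have hfβ : ‖Ψ β‖ ≤ q * ‖Ψ α‖ := by
          rw [hβα, hΨit, ← Function.iterate_succ_apply, Function.iterate_succ_apply',
            ← hΨit]
          exact hqb _
        have hεle : ε ≤ (1 - q) * ρ := min_le_left _ _
        have hstep : ‖Ψ β‖ ≤ ε * k := by
          nlinarith [mul_nonneg (sub_nonneg.mpr hq1.le) (sub_nonneg.mpr hρα.le)]
        obtain ⟨ℓ, η, k1, k2, k3⟩ := ih β hβΛ hstep
        obtain ⟨η', g1, g2, g3⟩ := naf_prepend Φ w Dbul 1 le_rfl 0 β α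
          (by simp [hβ]) (fun h => absurd rfl h) (Set.mem_insert 0 Dbul) ℓ η k1 k2 k3
        exact ⟨1 + ℓ, η', g1, g2, g3⟩
      · obtain ⟨δ, ⟨hδD, lam, hlamΛ, hlam⟩, _⟩ := hDrep α hα hsurj
        have hδV : Ψ δ ∈ V := by rw [← hsymmpow]; exact (hDV hδD).2
        have hδR : ‖Ψ δ‖ ≤ R := hVR hδV
        have hlamval : lam = Ψ (α - δ) := by
          have h := congrArg (Φ ^ w).symm hlam
          rw [LinearEquiv.symm_apply_apply] at h
          rw [h, hsymmpow]
        have hflam : ‖Ψ lam‖ ≤ s * (‖Ψ α‖ + R) := by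
          rw [hlamval]
          calc ‖Ψ (Ψ (α - δ))‖ ≤ s * ‖Ψ (α - δ)‖ := hΨb _
          _ = s * ‖Ψ α - Ψ δ‖ := by rw [map_sub]
          _ ≤ s * (‖Ψ α‖ + ‖Ψ δ‖) := mul_le_mul_of_nonneg_left (norm_sub_le _ _) hs0
          _ ≤ s * (‖Ψ α‖ + R) := mul_le_mul_of_nonneg_left (by linarith) hs0
        have hstep : ‖Ψ lam‖ ≤ ε * k := by
          by_cases hcase : ‖Ψ α‖ < r
          · have hlam0 : lam = 0 := by
              by_contra hne
              have hxV : Ψ α ∈ V := hrV hcase.le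
              have hx2 : Ψ α - lam ∈ V := by
                have he : Ψ α - lam = Ψ δ := by rw [hlamval, map_sub]; abel
                rw [he]; exact hδV
              have hfr := hVdisj lam hlamΛ hne (Ψ α) hxV hx2
              have hint : Ψ α ∈ interior V :=
                interior_maximal (fun x hx => hrV (le_of_lt (mem_ball_zero_iff.mp hx)))
                  Metric.isOpen_ball (mem_ball_zero_iff.mpr hcase)
              exact hfr.2 hint
            rw [hlam0, map_zero, norm_zero]
            positivity
          · push_neg at hcase
            have hεle : ε ≤ (1 - s) * r - s * R :=
              le_trans (min_le_right _ _) (min_le_left _ _)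
            nlinarith [mul_nonneg (sub_nonneg.mpr hs1.le) (sub_nonneg.mpr hcase)]
        obtain ⟨ℓ, η, k1, k2, k3⟩ := ih lam hlamΛ hstep
        obtain ⟨η', g1, g2, g3⟩ := naf_prepend Φ w Dbul w hw δ lam α
          (by rw [hLM w lam, hlam]; abel) (fun _ => le_rfl)
          (Set.mem_insert_of_mem 0 hδD) ℓ η k1 k2 k3
        exact ⟨w + ℓ, η', g1, g2, g3⟩
  intro α hα
  refine main ⌈‖Ψ α‖ / ε⌉₊ α hα ?_
  have h := Nat.le_ceil (‖Ψ α‖ / ε)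
  rw [div_le_iff₀ hε0] at h
  exact h.trans_eq (mul_comm _ _)
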